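/- Let W ⊆ ℝ^d be a bounded set such that for some ε > 0 and C > 0 the covering bound N_δ(W) ≤ C δ^{-(d*+ε)} holds for all sufficiently small δ > 0. Then for every α with d*+ε < α, the quantity E_α(MST(W_n)) is uniformly bounded over all finite subsets W_n of W. -/

import Mathlib

open Metric Set Finset

/-- The `α`-weighted total edge length of a graph `G` on a finite point set
`S ⊆ ℝ^d`: the sum of `‖u - v‖^α` over the edges of `G`. -/
noncomputable def treeCost {d : ℕ} (S : Finset (EuclideanSpace ℝ (Fin d)))
    (G : SimpleGraph S) (α : ℝ) : ℝ :=
  letI := Classical.decRel G.Adj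
  ∑ e ∈ G.edgeFinset,
    Sym2.lift ⟨fun (u v : S) => dist (u : EuclideanSpace ℝ (Fin d)) (v : EuclideanSpace ℝ (Fin d)) ^ α,
      fun u v => by simp [dist_comm]⟩ e

/-- `G` is a Euclidean minimum spanning tree on `S`: it is a tree (on vertex set `S`)
of minimal total Euclidean edge length among all trees on `S`. -/
def IsMST {d : ℕ} (S : Finset (EuclideanSpace ℝ (Fin d))) (G : SimpleGraph S) : Prop :=
  G.IsTree ∧ ∀ H : SimpleGraph S, H.IsTree → treeCost S G 1 ≤ treeCost S H 1

/-- Maximal number of pairwise disjoint closed `δ`-balls with centers in `W`. -/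
noncomputable def packingNumber {d : ℕ} (W : Set (EuclideanSpace ℝ (Fin d))) (δ : ℝ) : ℕ :=
  sSup {n : ℕ | ∃ s : Finset (EuclideanSpace ℝ (Fin d)), ↑s ⊆ W ∧ s.card = n ∧
    (s : Set (EuclideanSpace ℝ (Fin d))).Pairwise fun x y =>
      Disjoint (closedBall x δ) (closedBall y δ)}

open MeasureTheory ENNReal in
lemma vol_pack {d : ℕ} (Q : Finset (EuclideanSpace ℝ (Fin d))) (z : EuclideanSpace ℝ (Fin d))
    {ρ δ : ℝ} (hδ : 0 < δ) (hρ : 0 ≤ ρ)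
    (hin : ∀ q ∈ Q, dist q z ≤ ρ)
    (hdisj : (Q : Set (EuclideanSpace ℝ (Fin d))).Pairwise fun x y =>
      Disjoint (closedBall x δ) (closedBall y δ)) :
    (Q.card : ℝ) ≤ ((ρ + δ) / δ) ^ d := by
  have hvol1pos : 0 < volume (ball (0:EuclideanSpace ℝ (Fin d)) 1) :=
    measure_ball_pos _ _ one_pos
  have hvol1top : volume (ball (0:EuclideanSpace ℝ (Fin d)) 1) < ⊤ := measure_ball_lt_top
  have hd : Module.finrank ℝ (EuclideanSpace ℝ (Fin d)) = d := finrank_euclideanSpace_fin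
  have hball : ∀ (x : EuclideanSpace ℝ (Fin d)) (r : ℝ), 0 ≤ r →
      volume (closedBall x r) = ENNReal.ofReal (r ^ d) * volume (ball (0:EuclideanSpace ℝ (Fin d)) 1) := by
    intro x r hr
    rw [Measure.addHaar_closedBall volume x hr, hd]
  have hunion : (⋃ q ∈ Q, closedBall (q : EuclideanSpace ℝ (Fin d)) δ) ⊆ closedBall z (ρ + δ) := by
    intro x hx
    simp only [mem_iUnion] at hx
    obtain ⟨q, hq, hxq⟩ := hx
    have h2 := hin q hq
    simp only [mem_closedBall] at *
    calc dist x z ≤ dist x q + dist q z := dist_triangle _ _ _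
      _ ≤ δ + ρ := add_le_add hxq h2
      _ = ρ + δ := add_comm _ _
  have key : (Q.card : ℝ≥0∞) * ENNReal.ofReal (δ ^ d) * volume (ball (0:EuclideanSpace ℝ (Fin d)) 1)
      ≤ ENNReal.ofReal ((ρ + δ) ^ d) * volume (ball (0:EuclideanSpace ℝ (Fin d)) 1) := by
    rw [← hball z (ρ + δ) (by positivity)]
    calc (Q.card : ℝ≥0∞) * ENNReal.ofReal (δ ^ d) * volume (ball (0:EuclideanSpace ℝ (Fin d)) 1)
        = ∑ q ∈ Q, volume (closedBall (q : EuclideanSpace ℝ (Fin d)) δ) := by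
          rw [Finset.sum_congr rfl (fun q _ => hball q δ hδ.le)]
          simp [Finset.sum_const, nsmul_eq_mul, mul_assoc]
      _ = volume (⋃ q ∈ Q, closedBall (q : EuclideanSpace ℝ (Fin d)) δ) :=
          (measure_biUnion_finset hdisj (fun q _ => measurableSet_closedBall)).symm
      _ ≤ volume (closedBall z (ρ + δ)) := measure_mono hunion
  have key2 : (Q.card : ℝ≥0∞) * ENNReal.ofReal (δ ^ d) ≤ ENNReal.ofReal ((ρ + δ) ^ d) :=
    (ENNReal.mul_le_mul_iff_left hvol1pos.ne' hvol1top.ne).mp key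
  have key3 : (Q.card : ℝ) * δ ^ d ≤ (ρ + δ) ^ d := by
    have hδd : (0:ℝ) < δ ^ d := by positivity
    rw [← ENNReal.ofReal_natCast Q.card, ← ENNReal.ofReal_mul (by positivity)] at key2
    have := (ENNReal.ofReal_le_ofReal_iff (by positivity)).mp key2
    linarith
  rw [div_pow]
  rw [le_div_iff₀ (by positivity)]
  linarith

section PackAux
variable {d : ℕ} {W : Set (EuclideanSpace ℝ (Fin d))}

def packSet (W : Set (EuclideanSpace ℝ (Fin d))) (δ : ℝ) : Set ℕ :=
  {n : ℕ | ∃ s : Finset (EuclideanSpace ℝ (Fin d)), ↑s ⊆ W ∧ s.card = n ∧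
    (s : Set (EuclideanSpace ℝ (Fin d))).Pairwise fun x y =>
      Disjoint (closedBall x δ) (closedBall y δ)}

lemma packingNumber_eq (δ : ℝ) : packingNumber W δ = sSup (packSet W δ) := rfl

lemma packSet_nonempty (δ : ℝ) : (packSet W δ).Nonempty :=
  ⟨0, ∅, by simp, by simp, by simp⟩

lemma packSet_bddAbove (hW : Bornology.IsBounded W) {δ : ℝ} (hδ : 0 < δ) :
    BddAbove (packSet W δ) := by
  obtain ⟨R, hR, hsub⟩ : ∃ R > 0, W ⊆ closedBall 0 R := by
    obtain ⟨R0, hsub⟩ := hW.subset_closedBall 0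
    exact ⟨max R0 1, lt_of_lt_of_le one_pos (le_max_right _ _),
      hsub.trans (closedBall_subset_closedBall (le_max_left _ _))⟩
  refine ⟨Nat.floor (((R + δ) / δ) ^ d), fun n hn => ?_⟩
  obtain ⟨s, hsW, hcard, hdisj⟩ := hn
  apply Nat.le_floor
  rw [← hcard]
  exact_mod_cast vol_pack s 0 hδ hR.le
    (fun q hq => by simpa [mem_closedBall] using hsub (hsW hq)) hdisj

lemma exists_net (hW : Bornology.IsBounded W) {δ : ℝ} (hδ : 0 < δ) :
    ∃ P : Finset (EuclideanSpace ℝ (Fin d)), ↑P ⊆ W ∧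
      (P : Set (EuclideanSpace ℝ (Fin d))).Pairwise
        (fun x y => Disjoint (closedBall x δ) (closedBall y δ)) ∧
      P.card = packingNumber W δ ∧ ∀ w ∈ W, ∃ p ∈ P, dist w p ≤ 2 * δ := by
  have hmem : packingNumber W δ ∈ packSet W δ :=
    Nat.sSup_mem (packSet_nonempty δ) (packSet_bddAbove hW hδ)
  obtain ⟨P, hPW, hPcard, hPdisj⟩ := hmem
  refine ⟨P, hPW, hPdisj, hPcard, ?_⟩
  classical
  intro w hw
  by_contra hcon
  push_neg at hcon
  have hwP : w ∉ P := by
    intro hmem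
    have := hcon w hmem
    rw [dist_self] at this
    linarith
  have hnew : (insert w P : Finset _).card ∈ packSet W δ := by
    refine ⟨insert w P, ?_, rfl, ?_⟩
    · rw [Finset.coe_insert]
      exact Set.insert_subset hw hPW
    · rw [Finset.coe_insert]
      refine Set.Pairwise.insert hPdisj ?_
      intro p hp hne
      have hdist : 2 * δ < dist w p := hcon p hp
      constructor
      · exact closedBall_disjoint_closedBall (by linarith)
      · exact closedBall_disjoint_closedBall (by rw [dist_comm]; linarith)
  have hle : (insert w P : Finset _).card ≤ packingNumber W δ :=
    le_csSup (packSet_bddAbove hW hδ) hnew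
  rw [Finset.card_insert_of_notMem hwP, hPcard] at hle
  omega

lemma packingNumber_antitone (hW : Bornology.IsBounded W) {δ δ' : ℝ} (hδ' : 0 < δ') (h : δ' ≤ δ) :
    packingNumber W δ ≤ packingNumber W δ' := by
  have hδ : 0 < δ := lt_of_lt_of_le hδ' h
  have hsub : packSet W δ ⊆ packSet W δ' := by
    rintro n ⟨s, h1, h2, h3⟩
    exact ⟨s, h1, h2, fun x hx y hy hne => (h3 hx hy hne).mono
      (closedBall_subset_closedBall h) (closedBall_subset_closedBall h)⟩
  exact csSup_le_csSup (packSet_bddAbove hW hδ') (packSet_nonempty δ) hsub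

end PackAux

open SimpleGraph in
lemma reach_dichotomy {G : SimpleGraph V} (u v : V) {w t : V} (p : G.Walk w t) (ht : t = u) :
      (G.deleteEdges {s(u,v)}).Reachable w u ∨ (G.deleteEdges {s(u,v)}).Reachable w v := by
  induction p with
  | nil => subst ht; exact Or.inl (Reachable.refl _)
  | @cons w x _ h q ih =>
    replace ih := ih ht
    by_cases he : s(w, x) = s(u, v)
    · rw [Sym2.eq_iff] at he
      rcases he with ⟨rfl, rfl⟩ | ⟨rfl, rfl⟩
      · exact Or.inl (Reachable.refl _)
      · exact Or.inr (Reachable.refl _)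
    · have hadj : (G.deleteEdges {s(u,v)}).Adj w x := by
        rw [SimpleGraph.deleteEdges_adj]
        exact ⟨h, by simpa using he⟩
      rcases ih with h1 | h1
      · exact Or.inl (hadj.reachable.trans h1)
      · exact Or.inr (hadj.reachable.trans h1)

open SimpleGraph in
lemma tree_swap {G : SimpleGraph V} (hG : G.IsTree) {u v a b : V}
    (huv : G.Adj u v) (hau : (G.deleteEdges {s(u,v)}).Reachable a u)
    (hbv : (G.deleteEdges {s(u,v)}).Reachable b v) :
    ∃ H : SimpleGraph V, H.IsTree ∧ H.edgeSet = (G.edgeSet \ {s(u,v)}) ∪ {s(a,b)} ∧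
      s(a,b) ∉ G.edgeSet \ {s(u,v)} := by
  set G' := G.deleteEdges {s(u,v)} with hG'
  have hbridge : ¬ G'.Reachable u v := by
    have hB : G.IsBridge s(u,v) :=
      isAcyclic_iff_forall_adj_isBridge.mp hG.IsAcyclic huv
    exact hB
  have hab : a ≠ b := by
    rintro rfl
    exact hbridge (hau.symm.trans hbv)
  set F := SimpleGraph.fromEdgeSet {s(a,b)} with hF
  have hFadj : F.Adj a b := by simp [hF, hab]
  set H := G' ⊔ F with hH
  have hG'G : G' ≤ G := SimpleGraph.deleteEdges_le _
  have habG' : ¬ G'.Adj a b := fun h =>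
    hbridge (hau.symm.trans (h.reachable.trans hbv))
  -- connectivity
  have hreach : ∀ w : V, H.Reachable w a := by
    intro w
    obtain ⟨p⟩ := hG.isConnected.preconnected w u
    rcases reach_dichotomy u v p rfl with h1 | h1
    · exact Reachable.mono le_sup_left (h1.trans hau.symm)
    · refine Reachable.trans (Reachable.mono le_sup_left (h1.trans hbv.symm)) ?_
      exact (SimpleGraph.Adj.reachable (le_sup_right (b := F) hFadj.symm))
  have hHconn : H.Connected := by
    rw [SimpleGraph.connected_iff_exists_forall_reachable]
    exact ⟨a, fun w => (hreach w).symm⟩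
  -- acyclicity
  have hHsubG : H.deleteEdges {s(a,b)} ≤ G := by
    intro x y hxy
    rw [SimpleGraph.deleteEdges_adj] at hxy
    rcases hxy.1 with h1 | h1
    · exact hG'G h1
    · exfalso
      rw [SimpleGraph.fromEdgeSet_adj] at h1
      exact hxy.2 h1.1
  have hHbridge : ¬ (H \ SimpleGraph.fromEdgeSet {s(a,b)}).Reachable a b := by
    intro hr
    have hle : (H \ SimpleGraph.fromEdgeSet {s(a,b)}) ≤ G' := by
      intro x y hxy
      rw [SimpleGraph.sdiff_adj] at hxy
      rcases hxy.1 with h1 | h1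
      · exact h1
      · exact absurd h1 hxy.2
    exact hbridge (hau.symm.trans ((hr.mono hle).trans hbv))
  have hHacyc : H.IsAcyclic := by
    intro x c hc
    by_cases hmem : s(a,b) ∈ c.edges
    · have hB : H.IsBridge s(a,b) := hHbridge
      exact hB.notMem_edges_of_isCycle hc hmem
    · have hcd : ∀ e ∈ c.edges, e ∈ G.edgeSet := by
        intro e he
        have heH : e ∈ H.edgeSet := c.edges_subset_edgeSet he
        rw [hH, SimpleGraph.edgeSet_sup] at heH
        rcases heH with h1 | h1
        · exact (SimpleGraph.edgeSet_mono hG'G) h1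
        · exfalso
          rw [hF, SimpleGraph.edgeSet_fromEdgeSet] at h1
          obtain ⟨h2, -⟩ := h1
          rw [Set.mem_singleton_iff] at h2
          exact hmem (h2 ▸ he)
      exact hG.IsAcyclic _ (hc.transfer hcd)
  refine ⟨H, ⟨hHconn, hHacyc⟩, ?_, ?_⟩
  · rw [hH, SimpleGraph.edgeSet_sup, hG', SimpleGraph.edgeSet_deleteEdges,
      hF, SimpleGraph.edgeSet_fromEdgeSet]
    congr 1
    ext e
    simp only [Set.mem_diff, Set.mem_singleton_iff, Set.mem_setOf_eq]
    constructor
    · exact fun h => h.1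
    · rintro rfl
      exact ⟨rfl, by simp [Sym2.isDiag_iff_proj_eq, hab]⟩
  · rintro ⟨h1, h2⟩
    exact habG' (by rw [hG', SimpleGraph.deleteEdges_adj]
                    exact ⟨(SimpleGraph.mem_edgeSet _).mp h1, by simpa using h2⟩)

section MSTAux
variable {d : ℕ} {S : Finset (EuclideanSpace ℝ (Fin d))}

noncomputable def eLen (α : ℝ) : Sym2 (↥S) → ℝ :=
  Sym2.lift ⟨fun (u v : S) => dist (u : EuclideanSpace ℝ (Fin d)) (v : EuclideanSpace ℝ (Fin d)) ^ α,
      fun u v => by simp [dist_comm]⟩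

lemma treeCost_eq (G : SimpleGraph ↥S) (α : ℝ) [inst : Fintype G.edgeSet] :
    treeCost S G α = ∑ e ∈ G.edgeFinset, eLen α e := by
  rw [treeCost]
  refine Finset.sum_congr ?_ (fun e _ => rfl)
  ext e
  simp [SimpleGraph.mem_edgeFinset]

lemma mst_dist_le {G : SimpleGraph ↥S} (hG : IsMST S G) {u v a b : ↥S} (huv : G.Adj u v)
    (hau : (G.deleteEdges {s(u,v)}).Reachable a u)
    (hbv : (G.deleteEdges {s(u,v)}).Reachable b v) :
    dist (u : EuclideanSpace ℝ (Fin d)) (v : EuclideanSpace ℝ (Fin d))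
      ≤ dist (a : EuclideanSpace ℝ (Fin d)) (b : EuclideanSpace ℝ (Fin d)) := by
  classical
  obtain ⟨H, hHtree, hedge, hnot⟩ := tree_swap hG.1 huv hau hbv
  have h1 : treeCost S G 1 ≤ treeCost S H 1 := hG.2 H hHtree
  rw [treeCost_eq, treeCost_eq] at h1
  have huvG : s(u,v) ∈ G.edgeFinset := by
    rw [SimpleGraph.mem_edgeFinset]; exact huv
  have habe : s(a,b) ∉ (G.edgeFinset.erase s(u,v)) := by
    intro hmem
    rw [Finset.mem_erase, SimpleGraph.mem_edgeFinset] at hmem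
    exact hnot ⟨hmem.2, hmem.1⟩
  have hef : H.edgeFinset = insert s(a,b) (G.edgeFinset.erase s(u,v)) := by
    ext e
    rw [SimpleGraph.mem_edgeFinset, hedge]
    simp only [Set.mem_union, Set.mem_diff, Set.mem_singleton_iff, Finset.mem_insert,
      Finset.mem_erase, SimpleGraph.mem_edgeFinset]
    tauto
  rw [hef, Finset.sum_insert habe, Finset.sum_erase_eq_sub huvG] at h1
  have h2 : eLen (1:ℝ) s(u,v) ≤ eLen (1:ℝ) s(a,b) := by linarith
  simpa [eLen, Sym2.lift_mk, Real.rpow_one] using h2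

lemma mst_cross {G : SimpleGraph ↥S} (hG : IsMST S G) {u v x y : ↥S}
    (huv : G.Adj u v) (hxy : G.Adj x y) (hne : s(u,v) ≠ s(x,y)) :
    (dist (u : EuclideanSpace ℝ (Fin d)) (v : EuclideanSpace ℝ (Fin d))
        ≤ dist (u : EuclideanSpace ℝ (Fin d)) (x : EuclideanSpace ℝ (Fin d)) ∧
      dist (u : EuclideanSpace ℝ (Fin d)) (v : EuclideanSpace ℝ (Fin d))
        ≤ dist (u : EuclideanSpace ℝ (Fin d)) (y : EuclideanSpace ℝ (Fin d))) ∨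
    (dist (u : EuclideanSpace ℝ (Fin d)) (v : EuclideanSpace ℝ (Fin d))
        ≤ dist (v : EuclideanSpace ℝ (Fin d)) (x : EuclideanSpace ℝ (Fin d)) ∧
      dist (u : EuclideanSpace ℝ (Fin d)) (v : EuclideanSpace ℝ (Fin d))
        ≤ dist (v : EuclideanSpace ℝ (Fin d)) (y : EuclideanSpace ℝ (Fin d))) := by
  have hxyG' : (G.deleteEdges {s(u,v)}).Adj x y := by
    rw [SimpleGraph.deleteEdges_adj]
    exact ⟨hxy, by simpa using hne.symm⟩
  obtain ⟨p⟩ := hG.1.isConnected.preconnected x u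
  rcases reach_dichotomy u v p rfl with h1 | h1
  · -- x (and y) reach u; pair v with x and y
    have h2 : (G.deleteEdges {s(u,v)}).Reachable y u := hxyG'.symm.reachable.trans h1
    refine Or.inr ⟨?_, ?_⟩
    · have := mst_dist_le hG huv h1 (SimpleGraph.Reachable.refl v)
      rwa [dist_comm (x : EuclideanSpace ℝ (Fin d))] at this
    · have := mst_dist_le hG huv h2 (SimpleGraph.Reachable.refl v)
      rwa [dist_comm (y : EuclideanSpace ℝ (Fin d))] at this
  · have h2 : (G.deleteEdges {s(u,v)}).Reachable y v := hxyG'.symm.reachable.trans h1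
    exact Or.inl ⟨mst_dist_le hG huv (SimpleGraph.Reachable.refl u) h1,
      mst_dist_le hG huv (SimpleGraph.Reachable.refl u) h2⟩

end MSTAux

set_option maxHeartbeats 2000000

/-- A power-law covering bound `N_δ(W) ≤ C δ^{-(d*+ε)}` implies that for every
`α > d* + ε`, the `α`-weighted MST lengths are uniformly bounded over all finite
subsets of `W`. -/
theorem stmt7 {d : ℕ} (W : Set (EuclideanSpace ℝ (Fin d))) (hW : Bornology.IsBounded W)
    (dstar ε C : ℝ) (hε : 0 < ε) (hC : 0 < C)
    (hcov : ∃ δ₁ > (0:ℝ), ∀ δ : ℝ, 0 < δ → δ ≤ δ₁ →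
      (packingNumber W δ : ℝ) ≤ C * δ ^ (-(dstar + ε))) :
    ∀ α : ℝ, dstar + ε < α → ∃ C' : ℝ,
      ∀ S : Finset (EuclideanSpace ℝ (Fin d)), ↑S ⊆ W →
        ∀ G : SimpleGraph S, IsMST S G → treeCost S G α ≤ C' := by
  classical
  intro α hα
  set σ : ℝ := dstar + ε with hσ
  obtain ⟨δ₁, hδ₁, hpack⟩ := hcov
  obtain ⟨R₀, hsub₀⟩ := hW.subset_closedBall 0
  set R : ℝ := max (2 * R₀) 1 with hRdef
  have hRpos : (0:ℝ) < R := lt_of_lt_of_le one_pos (le_max_right _ _)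
  have hdistW : ∀ w ∈ W, ∀ w' ∈ W, dist w w' ≤ R := by
    intro w hw w' hw'
    have h1 : dist w 0 ≤ R₀ := by simpa [mem_closedBall] using hsub₀ hw
    have h2 : dist w' 0 ≤ R₀ := by simpa [mem_closedBall] using hsub₀ hw'
    calc dist w w' ≤ dist w 0 + dist 0 w' := dist_triangle _ _ _
      _ = dist w 0 + dist w' 0 := by rw [dist_comm 0 w']
      _ ≤ 2 * R₀ := by linarith
      _ ≤ R := le_max_left _ _
  -- uniform covering bound for all scales δ ∈ (0, R]
  set δ₂ : ℝ := min δ₁ R with hδ₂def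
  have hδ₂pos : 0 < δ₂ := lt_min hδ₁ hRpos
  set m : ℝ := min (δ₂ ^ (-σ)) (R ^ (-σ)) with hmdef
  have hmpos : 0 < m := lt_min (Real.rpow_pos_of_pos hδ₂pos _) (Real.rpow_pos_of_pos hRpos _)
  set C₂ : ℝ := max C (C * δ₂ ^ (-σ) / m) with hC₂def
  have hC₂pos : 0 < C₂ := lt_of_lt_of_le hC (le_max_left _ _)
  have hcov2 : ∀ δ : ℝ, 0 < δ → δ ≤ R → (packingNumber W δ : ℝ) ≤ C₂ * δ ^ (-σ) := by
    intro δ hδpos hδR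
    rcases le_or_gt δ δ₂ with h | h
    · have h1 := hpack δ hδpos (h.trans (min_le_left _ _))
      have h2 : (0:ℝ) < δ ^ (-σ) := Real.rpow_pos_of_pos hδpos _
      calc (packingNumber W δ : ℝ) ≤ C * δ ^ (-σ) := h1
        _ ≤ C₂ * δ ^ (-σ) := by
            apply mul_le_mul_of_nonneg_right (le_max_left _ _) h2.le
    · have h1 : packingNumber W δ ≤ packingNumber W δ₂ :=
        packingNumber_antitone hW hδ₂pos h.le
      have h2 : (packingNumber W δ₂ : ℝ) ≤ C * δ₂ ^ (-σ) :=
        hpack δ₂ hδ₂pos (min_le_left _ _)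
      have h3 : m ≤ δ ^ (-σ) := by
        rcases le_or_gt 0 (-σ) with hσ' | hσ'
        · calc m ≤ δ₂ ^ (-σ) := min_le_left _ _
            _ ≤ δ ^ (-σ) := Real.rpow_le_rpow hδ₂pos.le h.le hσ'
        · calc m ≤ R ^ (-σ) := min_le_right _ _
            _ ≤ δ ^ (-σ) := Real.rpow_le_rpow_of_nonpos hδpos hδR hσ'.le
      calc (packingNumber W δ : ℝ) ≤ C * δ₂ ^ (-σ) := by
            exact_mod_cast le_trans (Nat.cast_le.mpr h1) h2
        _ = (C * δ₂ ^ (-σ) / m) * m := by field_simp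
        _ ≤ C₂ * δ ^ (-σ) := by
            apply mul_le_mul (le_max_right _ _) h3 hmpos.le hC₂pos.le
  -- geometric series data
  set β : ℝ := α - σ with hβdef
  have hβpos : 0 < β := by simp [hβdef, hσ]; linarith
  set ρ : ℝ := (2:ℝ) ^ (-β) with hρdef
  have hρpos : 0 < ρ := Real.rpow_pos_of_pos two_pos _
  have hρlt : ρ < 1 := Real.rpow_lt_one_of_one_lt_of_neg one_lt_two (by linarith)
  set M : ℝ := max ((2:ℝ) ^ (-α)) 1 with hMdef
  have hMpos : (0:ℝ) < M := lt_of_lt_of_le one_pos (le_max_right _ _)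
  set A : ℝ := C₂ * (16:ℝ) ^ σ * (33:ℝ)^d * M with hAdef
  have hApos : 0 < A := by
    apply mul_pos (mul_pos (mul_pos hC₂pos (Real.rpow_pos_of_pos (by norm_num) _)) (by positivity)) hMpos
  refine ⟨A * R ^ β / (1 - ρ), ?_⟩
  intro S hSW G hG
  rw [treeCost_eq]
  -- basic edge facts
  have hmemW : ∀ x : ↥S, (x : EuclideanSpace ℝ (Fin d)) ∈ W := fun x => hSW x.2
  have hout : ∀ e : Sym2 ↥S, s(e.out.1, e.out.2) = e := by
    intro e; exact e.out_eq
  have hadj_of_mem : ∀ e ∈ G.edgeFinset, G.Adj e.out.1 e.out.2 := by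
    intro e he
    rw [SimpleGraph.mem_edgeFinset] at he
    rw [← SimpleGraph.mem_edgeSet, hout e]
    exact he
  have heLen : ∀ (γ : ℝ) (e : Sym2 ↥S),
      eLen γ e = dist (e.out.1 : EuclideanSpace ℝ (Fin d)) (e.out.2 : EuclideanSpace ℝ (Fin d)) ^ γ := by
    intro γ e
    conv_lhs => rw [← hout e]
    rfl
  have hLpos : ∀ e ∈ G.edgeFinset, 0 < eLen (1:ℝ) e ∧ eLen (1:ℝ) e ≤ R := by
    intro e he
    have hadj := hadj_of_mem e he
    have hne : (e.out.1 : EuclideanSpace ℝ (Fin d)) ≠ (e.out.2 : EuclideanSpace ℝ (Fin d)) :=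
      fun h => hadj.ne (Subtype.coe_injective h)
    rw [heLen, Real.rpow_one]
    exact ⟨dist_pos.mpr hne, hdistW _ (hmemW _) _ (hmemW _)⟩
  -- scale function
  set ke : Sym2 ↥S → ℕ := fun e =>
    if h : ∃ k : ℕ, R / 2^(k+1) < eLen (1:ℝ) e then Nat.find h else 0 with hkedef
  have hke : ∀ e ∈ G.edgeFinset,
      R / 2^(ke e + 1) < eLen (1:ℝ) e ∧ eLen (1:ℝ) e ≤ R / 2^(ke e) := by
    intro e he
    obtain ⟨hpos, hle⟩ := hLpos e he
    have hex : ∃ k : ℕ, R / 2^(k+1) < eLen (1:ℝ) e := by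
      obtain ⟨k, hk⟩ := pow_unbounded_of_one_lt (R / eLen (1:ℝ) e) (one_lt_two (α := ℝ))
      refine ⟨k, ?_⟩
      rw [div_lt_iff₀ (by positivity)] at hk ⊢
      have h2 : (2:ℝ)^k ≤ 2^(k+1) := by
        apply pow_le_pow_right₀ (by norm_num) (Nat.le_succ _)
      nlinarith [hpos]
    have hkeq : ke e = Nat.find hex := by rw [hkedef]; exact dif_pos hex
    constructor
    · rw [hkeq]; exact Nat.find_spec hex
    · rw [hkeq]
      rcases Nat.eq_zero_or_pos (Nat.find hex) with h0 | h0
      · rw [h0]; simpa using hle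
      · obtain ⟨k', hk'⟩ : ∃ k', Nat.find hex = k' + 1 := ⟨Nat.find hex - 1, by omega⟩
        rw [hk']
        have := Nat.find_min hex (by omega : k' < Nat.find hex)
        push_neg at this
        simpa using this
  -- fiberwise decomposition
  set n : ℕ := (G.edgeFinset.sup ke) + 1 with hndef
  have hsplit : ∑ e ∈ G.edgeFinset, eLen α e
      = ∑ k ∈ Finset.range n, ∑ e ∈ G.edgeFinset.filter (fun e => ke e = k), eLen α e := by
    rw [Finset.sum_fiberwise_of_maps_to]
    intro e he
    rw [Finset.mem_range, hndef]
    exact lt_of_le_of_lt (Finset.le_sup he) (lt_add_one _)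
  rw [hsplit]
  -- per-scale bound
  have hscale : ∀ k : ℕ,
      ∑ e ∈ G.edgeFinset.filter (fun e => ke e = k), eLen α e ≤ A * R ^ β * ρ ^ k := by
    intro k
    set r : ℝ := R / 2^k with hrdef
    have hrpos : 0 < r := by positivity
    have hrR : r ≤ R := by
      rw [hrdef]
      exact div_le_self hRpos.le (one_le_pow₀ (by norm_num))
    set δ : ℝ := r / 16 with hδdef
    have hδpos : 0 < δ := by positivity
    have hδR : δ ≤ R := by rw [hδdef]; nlinarith
    obtain ⟨P, hPW, hPdisj, hPcard, hPnet⟩ := exists_net hW hδpos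
    set cc : EuclideanSpace ℝ (Fin d) → EuclideanSpace ℝ (Fin d) :=
      fun w => if h : w ∈ W then (hPnet w h).choose else w with hccdef
    have hcc : ∀ w ∈ W, cc w ∈ P ∧ dist w (cc w) ≤ 2 * δ := by
      intro w hw
      have := (hPnet w hw).choose_spec
      rw [hccdef]
      simp only [dif_pos hw]
      exact this
    set Ek := G.edgeFinset.filter (fun e => ke e = k) with hEkdef
    have hEksub : Ek ⊆ G.edgeFinset := Finset.filter_subset _ _
    have hwin : ∀ e ∈ Ek,
        r / 2 < dist (e.out.1 : EuclideanSpace ℝ (Fin d)) (e.out.2 : EuclideanSpace ℝ (Fin d)) ∧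
        dist (e.out.1 : EuclideanSpace ℝ (Fin d)) (e.out.2 : EuclideanSpace ℝ (Fin d)) ≤ r := by
      intro e he
      rw [hEkdef, Finset.mem_filter] at he
      obtain ⟨he1, he2⟩ := he
      have hw := hke e he1
      rw [he2] at hw
      have hL : eLen (1:ℝ) e
          = dist (e.out.1 : EuclideanSpace ℝ (Fin d)) (e.out.2 : EuclideanSpace ℝ (Fin d)) := by
        rw [heLen, Real.rpow_one]
      rw [hL] at hw
      have h1 : R / 2^(k+1) = r / 2 := by rw [hrdef, pow_succ, ← div_div]
      rw [h1] at hw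
      exact hw
    set F : Sym2 ↥S → EuclideanSpace ℝ (Fin d) × EuclideanSpace ℝ (Fin d) :=
      fun e => (cc ↑e.out.1, cc ↑e.out.2) with hFdef
    set T := (P ×ˢ P).filter (fun q => dist q.1 q.2 ≤ 2 * r) with hTdef
    have hmaps : ∀ e ∈ Ek, F e ∈ T := by
      intro e he
      obtain ⟨hcx, hdx⟩ := hcc _ (hmemW e.out.1)
      obtain ⟨hcy, hdy⟩ := hcc _ (hmemW e.out.2)
      rw [hTdef, Finset.mem_filter, Finset.mem_product]
      refine ⟨⟨hcx, hcy⟩, ?_⟩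
      have hxy := (hwin e he).2
      calc dist (cc ↑e.out.1) (cc ↑e.out.2)
          ≤ dist (cc ↑e.out.1) (↑e.out.1 : EuclideanSpace ℝ (Fin d))
            + dist (↑e.out.1 : EuclideanSpace ℝ (Fin d)) (cc ↑e.out.2) := dist_triangle _ _ _
        _ ≤ dist (cc ↑e.out.1) (↑e.out.1 : EuclideanSpace ℝ (Fin d))
            + (dist (↑e.out.1 : EuclideanSpace ℝ (Fin d)) (↑e.out.2 : EuclideanSpace ℝ (Fin d))
              + dist (↑e.out.2 : EuclideanSpace ℝ (Fin d)) (cc ↑e.out.2)) := by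
              have := dist_triangle (↑e.out.1 : EuclideanSpace ℝ (Fin d))
                (↑e.out.2 : EuclideanSpace ℝ (Fin d)) (cc ↑e.out.2)
              linarith
        _ ≤ 2*δ + (r + 2*δ) := by
              rw [dist_comm (cc ↑e.out.1)]
              exact add_le_add hdx (add_le_add hxy hdy)
        _ ≤ 2 * r := by rw [hδdef]; linarith
    have hinj : Set.InjOn F ↑Ek := by
      intro e1 h1 e2 h2 hF12
      rw [Finset.mem_coe] at h1 h2
      by_contra hne
      have hadj1 := hadj_of_mem e1 (hEksub h1)
      have hadj2 := hadj_of_mem e2 (hEksub h2)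
      have hneq : s(e1.out.1, e1.out.2) ≠ s(e2.out.1, e2.out.2) := by
        rw [hout e1, hout e2]; exact hne
      have hcross := mst_cross hG hadj1 hadj2 hneq
      have hccx : cc ↑e1.out.1 = cc ↑e2.out.1 := congrArg Prod.fst hF12
      have hccy : cc ↑e1.out.2 = cc ↑e2.out.2 := congrArg Prod.snd hF12
      obtain ⟨hcx1, hdx1⟩ := hcc _ (hmemW e1.out.1)
      obtain ⟨hcy1, hdy1⟩ := hcc _ (hmemW e1.out.2)
      obtain ⟨hcx2, hdx2⟩ := hcc _ (hmemW e2.out.1)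
      obtain ⟨hcy2, hdy2⟩ := hcc _ (hmemW e2.out.2)
      have hdxx : dist (↑e1.out.1 : EuclideanSpace ℝ (Fin d)) ↑e2.out.1 ≤ 4 * δ := by
        calc dist (↑e1.out.1 : EuclideanSpace ℝ (Fin d)) ↑e2.out.1
            ≤ dist (↑e1.out.1 : EuclideanSpace ℝ (Fin d)) (cc ↑e1.out.1)
              + dist (cc ↑e1.out.1) (↑e2.out.1 : EuclideanSpace ℝ (Fin d)) := dist_triangle _ _ _
          _ ≤ 2*δ + 2*δ := by
              refine add_le_add hdx1 ?_
              rw [hccx, dist_comm]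
              exact hdx2
          _ = 4 * δ := by ring
      have hdyy : dist (↑e1.out.2 : EuclideanSpace ℝ (Fin d)) ↑e2.out.2 ≤ 4 * δ := by
        calc dist (↑e1.out.2 : EuclideanSpace ℝ (Fin d)) ↑e2.out.2
            ≤ dist (↑e1.out.2 : EuclideanSpace ℝ (Fin d)) (cc ↑e1.out.2)
              + dist (cc ↑e1.out.2) (↑e2.out.2 : EuclideanSpace ℝ (Fin d)) := dist_triangle _ _ _
          _ ≤ 2*δ + 2*δ := by
              refine add_le_add hdy1 ?_
              rw [hccy, dist_comm]
              exact hdy2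
          _ = 4 * δ := by ring
      have hL1 := (hwin e1 h1).1
      have h4δ : 4 * δ < r / 2 := by rw [hδdef]; linarith
      rcases hcross with ⟨hc1, -⟩ | ⟨-, hc2⟩
      · linarith
      · linarith
    have hcard1 : Ek.card ≤ T.card := Finset.card_le_card_of_injOn F hmaps hinj
    have hvol : ∀ p ∈ P, ((P.filter (fun p' => dist p p' ≤ 2*r)).card : ℝ) ≤ (33:ℝ)^d := by
      intro p hp
      have h33 : ((2*r + δ) / δ) = 33 := by
        rw [hδdef]; field_simp; ring
      have := vol_pack (P.filter (fun p' => dist p p' ≤ 2*r)) p hδpos (by positivity : (0:ℝ) ≤ 2*r)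
        (fun q hq => by
          rw [Finset.mem_filter] at hq
          rw [dist_comm]
          exact hq.2)
        (hPdisj.mono (by exact_mod_cast Finset.coe_subset.mpr (Finset.filter_subset _ _)))
      rwa [h33] at this
    have hcard2 : (T.card : ℝ) ≤ (P.card : ℝ) * (33:ℝ)^d := by
      have hfib : T.card = ∑ p ∈ P, (T.filter (fun q => q.1 = p)).card := by
        apply Finset.card_eq_sum_card_fiberwise
        intro q hq
        rw [hTdef, Finset.mem_coe, Finset.mem_filter, Finset.mem_product] at hq
        exact hq.1.1
      have hfible : ∀ p ∈ P, (T.filter (fun q => q.1 = p)).card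
          ≤ (P.filter (fun p' => dist p p' ≤ 2*r)).card := by
        intro p hp
        apply Finset.card_le_card_of_injOn Prod.snd
        · intro q hq
          rw [Finset.mem_coe, Finset.mem_filter] at hq
          obtain ⟨hqT, hq1⟩ := hq
          rw [hTdef, Finset.mem_filter, Finset.mem_product] at hqT
          rw [Finset.mem_coe, Finset.mem_filter]
          exact ⟨hqT.1.2, by rw [← hq1]; exact hqT.2⟩
        · intro q1 hq1 q2 hq2 hsnd
          rw [Finset.mem_coe, Finset.mem_filter] at hq1 hq2
          exact Prod.ext (hq1.2.trans hq2.2.symm) hsnd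
      calc (T.card : ℝ) = ∑ p ∈ P, ((T.filter (fun q => q.1 = p)).card : ℝ) := by
            rw [hfib]; push_cast; ring
        _ ≤ ∑ p ∈ P, (33:ℝ)^d := by
            apply Finset.sum_le_sum
            intro p hp
            exact le_trans (by exact_mod_cast hfible p hp) (hvol p hp)
        _ = (P.card : ℝ) * (33:ℝ)^d := by rw [Finset.sum_const]; push_cast; ring
    have hlenbound : ∀ e ∈ Ek, eLen α e ≤ r ^ α * M := by
      intro e he
      obtain ⟨hw1, hw2⟩ := hwin e he
      rw [heLen]
      set L := dist (e.out.1 : EuclideanSpace ℝ (Fin d)) (e.out.2 : EuclideanSpace ℝ (Fin d))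
      rcases le_or_gt 0 α with hα0 | hα0
      · calc L ^ α ≤ r ^ α := Real.rpow_le_rpow (by positivity) hw2 hα0
          _ ≤ r ^ α * M := le_mul_of_one_le_right (by positivity) (le_max_right _ _)
      · have h1 : L ^ α ≤ (r/2) ^ α :=
          Real.rpow_le_rpow_of_nonpos (by positivity) hw1.le hα0.le
        have h2 : (r/2) ^ α = r ^ α * (2:ℝ) ^ (-α) := by
          rw [Real.div_rpow hrpos.le (by norm_num), Real.rpow_neg (by norm_num), div_eq_mul_inv]
        calc L ^ α ≤ r ^ α * (2:ℝ) ^ (-α) := by rw [← h2]; exact h1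
          _ ≤ r ^ α * M := by
              apply mul_le_mul_of_nonneg_left (le_max_left _ _) (by positivity)
    have hsum : ∑ e ∈ Ek, eLen α e ≤ (Ek.card : ℝ) * (r ^ α * M) := by
      have := Finset.sum_le_card_nsmul Ek _ (r ^ α * M) hlenbound
      simpa [nsmul_eq_mul] using this
    have hNk : (P.card : ℝ) ≤ C₂ * δ ^ (-σ) := by
      rw [hPcard]
      exact hcov2 δ hδpos hδR
    have hδσ : δ ^ (-σ) = r ^ (-σ) * (16:ℝ) ^ σ := by
      rw [hδdef, Real.div_rpow hrpos.le (by norm_num), Real.rpow_neg (by norm_num : (0:ℝ) ≤ 16),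
        div_eq_mul_inv, inv_inv]
    have hrβ : r ^ α * r ^ (-σ) = r ^ β := by
      rw [← Real.rpow_add hrpos, hβdef]
      ring_nf
    have hrβ2 : r ^ β = R ^ β * ρ ^ k := by
      have h2k : ((2:ℝ)^k) ^ β = (2:ℝ) ^ ((k:ℝ) * β) := by
        rw [← Real.rpow_natCast 2 k, ← Real.rpow_mul (by norm_num)]
      have hρk : ρ ^ k = (2:ℝ) ^ (-((k:ℝ) * β)) := by
        rw [hρdef, ← Real.rpow_natCast ((2:ℝ) ^ (-β)) k, ← Real.rpow_mul (by norm_num)]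
        ring_nf
      rw [hrdef, Real.div_rpow hRpos.le (by positivity), h2k, hρk,
        Real.rpow_neg (by norm_num : (0:ℝ) ≤ 2), div_eq_mul_inv]
    calc ∑ e ∈ Ek, eLen α e ≤ (Ek.card : ℝ) * (r ^ α * M) := hsum
      _ ≤ (T.card : ℝ) * (r ^ α * M) := by
          apply mul_le_mul_of_nonneg_right (by exact_mod_cast hcard1) (by positivity)
      _ ≤ (P.card : ℝ) * (33:ℝ)^d * (r ^ α * M) := by
          apply mul_le_mul_of_nonneg_right hcard2 (by positivity)
      _ ≤ (C₂ * δ ^ (-σ)) * (33:ℝ)^d * (r ^ α * M) := by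
          apply mul_le_mul_of_nonneg_right (mul_le_mul_of_nonneg_right hNk (by positivity))
            (by positivity)
      _ = A * (r ^ α * r ^ (-σ)) := by
          rw [hδσ, hAdef]; ring
      _ = A * R ^ β * ρ ^ k := by rw [hrβ, hrβ2]; ring
  calc ∑ k ∈ Finset.range n, ∑ e ∈ G.edgeFinset.filter (fun e => ke e = k), eLen α e
      ≤ ∑ k ∈ Finset.range n, A * R ^ β * ρ ^ k :=
        Finset.sum_le_sum (fun k _ => hscale k)
    _ = A * R ^ β * ∑ k ∈ Finset.range n, ρ ^ k := by rw [Finset.mul_sum]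
    _ ≤ A * R ^ β * (1 / (1 - ρ)) := by
        apply mul_le_mul_of_nonneg_left _ (by positivity)
        rw [geom_sum_eq (ne_of_lt hρlt) n]
        have heq : (ρ ^ n - 1)/(ρ - 1) = (1 - ρ ^ n)/(1 - ρ) := by
          rw [← neg_div_neg_eq]; ring_nf
        rw [heq, div_le_div_iff₀ (by linarith) (by linarith)]
        have : (0:ℝ) ≤ ρ ^ n := by positivity
        nlinarith
    _ = A * R ^ β / (1 - ρ) := by ring
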